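/- Impossibility theorem, part 3 (Features 2 and 3 exclude Feature 1): Let H_W and H_S be Hermitian matrices on ℂ^{d_W} and ℂ^{d_S}, kT > 0, and for each x in a finite index set X with |X| = d_S let φ̃_x ∈ ℂ^{d_S} be a unit vector and U_x a unitary on ℂ^{d_W} ⊗ ℂ^{d_S} with [U_x, H_W ⊗ 1 + 1 ⊗ H_S] = 0. Let ρ_W be a density matrix on ℂ^{d_W}, set ρ'_{W,x} := tr₂[U_x(ρ_W ⊗ |φ̃_x⟩⟨φ̃_x|)U_x†] and W_x := F_{H_W}(ρ'_{W,x}) − F_{H_W}(ρ_W). If S(ρ'_{W,x}) = S(ρ_W) and W_x > 0 for all x ∈ X, then ⟨φ̃_x, H_S φ̃_x⟩ > λ_min(H_S) for every x ∈ X; in particular the family {φ̃_x}_{x∈X} is not an orthonormal basis of ℂ^{d_S} consisting of eigenvectors of H_S. -/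

import Mathlib

open Matrix
open scoped Kronecker Matrix ComplexOrder

noncomputable section

/-- A density matrix: positive semidefinite with unit trace. -/
def IsDensityMatrix {n : Type*} [Fintype n] (ρ : Matrix n n ℂ) : Prop :=
  ρ.PosSemidef ∧ ρ.trace = 1

/-- von Neumann entropy `S(ρ) = -∑ λᵢ log λᵢ` (junk value 0 if not Hermitian). -/
noncomputable def vnEntropy {n : Type*} [Fintype n] [DecidableEq n]
    (ρ : Matrix n n ℂ) : ℝ :=
  if h : ρ.IsHermitian then -∑ i, (h.eigenvalues i) * Real.log (h.eigenvalues i) else 0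

/-- Non-equilibrium free energy `F(ρ) = tr(Hρ) - kT S(ρ)`. -/
noncomputable def freeEnergy {n : Type*} [Fintype n] [DecidableEq n]
    (kT : ℝ) (H ρ : Matrix n n ℂ) : ℝ :=
  (Matrix.trace (H * ρ)).re - kT * vnEntropy ρ

/-- Least eigenvalue of a Hermitian matrix (junk value 0 if not Hermitian). -/
noncomputable def lambdaMin {n : Type*} [Fintype n] [DecidableEq n]
    (H : Matrix n n ℂ) : ℝ :=
  if h : H.IsHermitian then ⨅ i, h.eigenvalues i else 0

/-- Partial trace over the second tensor factor. -/
def ptrace2 {m n : Type*} [Fintype n]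
    (σ : Matrix (m × n) (m × n) ℂ) : Matrix m m ℂ :=
  fun i j => ∑ k, σ (i, k) (j, k)

/-- Partial trace over the first tensor factor. -/
def ptrace1 {m n : Type*} [Fintype m]
    (σ : Matrix (m × n) (m × n) ℂ) : Matrix n n ℂ :=
  fun k l => ∑ i, σ (i, k) (i, l)

/-- Outer product `|v⟩⟨v|`. -/
def outer {n : Type*} (v : n → ℂ) : Matrix n n ℂ :=
  Matrix.vecMulVec v (star v)

/-- Kronecker product of vectors. -/
def kronVec {m n : Type*} (v : m → ℂ) (w : n → ℂ) : m × n → ℂ :=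
  fun p => v p.1 * w p.2

section AuxLemmas

variable {m n : Type*} [Fintype m] [Fintype n] [DecidableEq m] [DecidableEq n]

set_option linter.unusedSectionVars false

lemma aux_trace_kron_one (A : Matrix m m ℂ) (σ : Matrix (m × n) (m × n) ℂ) :
    Matrix.trace ((A ⊗ₖ (1 : Matrix n n ℂ)) * σ) = Matrix.trace (A * ptrace2 σ) := by
  simp only [Matrix.trace, Matrix.diag, Matrix.mul_apply, ptrace2, kroneckerMap_apply,
    Fintype.sum_prod_type, Matrix.one_apply, mul_ite, mul_one, mul_zero, ite_mul, zero_mul,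
    Finset.sum_ite_irrel, Finset.sum_const_zero, Finset.sum_ite_eq, Finset.sum_ite_eq',
    Finset.mem_univ, if_true, Finset.mul_sum]
  exact Finset.sum_congr rfl fun i _ => Finset.sum_comm

lemma aux_trace_one_kron (B : Matrix n n ℂ) (σ : Matrix (m × n) (m × n) ℂ) :
    Matrix.trace (((1 : Matrix m m ℂ) ⊗ₖ B) * σ) = Matrix.trace (B * ptrace1 σ) := by
  simp only [Matrix.trace, Matrix.diag, Matrix.mul_apply, ptrace1, kroneckerMap_apply,
    Fintype.sum_prod_type, Matrix.one_apply, mul_ite, mul_one, mul_zero, ite_mul, zero_mul,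
    one_mul, Finset.sum_ite_irrel, Finset.sum_const_zero, Finset.sum_ite_eq, Finset.sum_ite_eq',
    Finset.mem_univ, if_true, Finset.mul_sum]
  rw [Finset.sum_comm]
  exact Finset.sum_congr rfl fun k _ => Finset.sum_comm

lemma aux_trace_ptrace1 (σ : Matrix (m × n) (m × n) ℂ) :
    Matrix.trace (ptrace1 σ) = Matrix.trace σ := by
  simp only [Matrix.trace, Matrix.diag, ptrace1, Fintype.sum_prod_type]
  exact Finset.sum_comm

lemma aux_conjTranspose_kron (A : Matrix m m ℂ) (B : Matrix n n ℂ) :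
    (A ⊗ₖ B)ᴴ = Aᴴ ⊗ₖ Bᴴ := by
  ext ⟨i,k⟩ ⟨j,l⟩
  simp [conjTranspose_apply, kroneckerMap_apply]

lemma aux_kron_posSemidef {A : Matrix m m ℂ} {B : Matrix n n ℂ}
    (hA : A.PosSemidef) (hB : B.PosSemidef) : (A ⊗ₖ B).PosSemidef := by
  exact hA.kronecker hB

lemma aux_outer_posSemidef (v : n → ℂ) : (outer v).PosSemidef := by
  have : outer v = replicateCol Unit v * (replicateCol Unit v)ᴴ := by
    ext i j
    simp [outer, vecMulVec_apply, mul_apply, conjTranspose_apply, replicateCol_apply]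
  rw [this]
  exact posSemidef_self_mul_conjTranspose _

lemma aux_outer_trace {v : n → ℂ} (hv : star v ⬝ᵥ v = 1) : (outer v).trace = 1 := by
  simpa [Matrix.trace, Matrix.diag, outer, vecMulVec_apply, dotProduct, mul_comm] using hv

lemma aux_trace_mul_outer (B : Matrix n n ℂ) (v : n → ℂ) :
    Matrix.trace (B * outer v) = star v ⬝ᵥ B.mulVec v := by
  simp only [Matrix.trace, Matrix.diag, Matrix.mul_apply, outer, vecMulVec_apply,
    dotProduct, mulVec, Pi.star_apply, Finset.mul_sum]
  exact Finset.sum_congr rfl fun i _ => Finset.sum_congr rfl fun j _ => by ring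

lemma aux_ptrace1_posSemidef {σ : Matrix (m × n) (m × n) ℂ} (hσ : σ.PosSemidef) :
    (ptrace1 σ).PosSemidef := by
  refine PosSemidef.of_dotProduct_mulVec_nonneg ?_ ?_
  · ext k l
    simp only [conjTranspose_apply, ptrace1, star_sum]
    exact Finset.sum_congr rfl fun i _ => congrFun (congrFun hσ.1 (i,k)) (i,l)
  · intro w
    have key : star w ⬝ᵥ (ptrace1 σ) *ᵥ w
        = ∑ i : m, star (fun p : m × n => if p.1 = i then w p.2 else 0) ⬝ᵥ
            σ *ᵥ (fun p : m × n => if p.1 = i then w p.2 else 0) := by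
      simp only [dotProduct, mulVec, ptrace1, Pi.star_apply, Fintype.sum_prod_type,
        apply_ite (star : ℂ → ℂ), star_zero, ite_mul, zero_mul, mul_ite, mul_zero,
        Finset.sum_ite_irrel, Finset.sum_const_zero, Finset.sum_ite_eq, Finset.sum_ite_eq',
        Finset.mem_univ, if_true, Finset.mul_sum, Finset.sum_mul]
      exact (Finset.sum_congr rfl fun k _ => Finset.sum_comm).trans Finset.sum_comm
    rw [key]
    exact Finset.sum_nonneg fun i _ => hσ.dotProduct_mulVec_nonneg _

lemma aux_diag_nonneg_of_posSemidef {τ : Matrix n n ℂ} (hτ : τ.PosSemidef) (i : n) :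
    0 ≤ τ i i := by
  have := hτ.dotProduct_mulVec_nonneg (Pi.single i 1)
  simpa [dotProduct, mulVec, Pi.single_apply, Finset.sum_ite_eq, Finset.sum_ite_eq',
    apply_ite (star : ℂ → ℂ)] using this

lemma aux_lambdaMin_le_trace_re [Nonempty n] {H ρ : Matrix n n ℂ}
    (hH : H.IsHermitian) (hρ : ρ.PosSemidef) (htr : ρ.trace = 1) :
    (⨅ i, hH.eigenvalues i) ≤ (Matrix.trace (H * ρ)).re := by
  set V : Matrix n n ℂ := (hH.eigenvectorUnitary : Matrix n n ℂ) with hV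
  set d : n → ℂ := fun i => (hH.eigenvalues i : ℂ) with hd
  set τ : Matrix n n ℂ := Vᴴ * ρ * V with hτdef
  have hVV : V * Vᴴ = 1 := by
    simpa [Matrix.star_eq_conjTranspose] using
      (Matrix.mem_unitaryGroup_iff).mp hH.eigenvectorUnitary.2
  have hτ : τ.PosSemidef := hρ.conjTranspose_mul_mul_same V
  have hτtr : τ.trace = 1 := by
    rw [hτdef, Matrix.trace_mul_cycle, hVV, Matrix.one_mul, htr]
  have hHd : H = V * Matrix.diagonal d * Vᴴ := by
    have h := hH.spectral_theorem
    simp [Matrix.star_eq_conjTranspose] at h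
    exact h
  have htrace : Matrix.trace (H * ρ) = ∑ i, d i * τ i i := by
    rw [hHd]
    have h1 : V * Matrix.diagonal d * Vᴴ * ρ = V * (Matrix.diagonal d * (Vᴴ * ρ)) := by
      simp [Matrix.mul_assoc]
    rw [h1, Matrix.trace_mul_comm, Matrix.mul_assoc (Matrix.diagonal d), ← hτdef]
    simp [Matrix.trace, Matrix.diag, Matrix.mul_apply, Matrix.diagonal_apply, ite_mul, zero_mul,
      Finset.sum_ite_eq, Finset.sum_ite_eq', Finset.mem_univ]
  have hdiag : ∀ i, 0 ≤ (τ i i).re ∧ (τ i i).im = 0 := by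
    intro i
    have h := aux_diag_nonneg_of_posSemidef hτ i
    rw [Complex.le_def] at h
    exact ⟨by simpa using h.1, by simpa using h.2.symm⟩
  have hre : (Matrix.trace (H * ρ)).re = ∑ i, hH.eigenvalues i * (τ i i).re := by
    rw [htrace, Complex.re_sum]
    exact Finset.sum_congr rfl fun i _ => by
      simp [hd, Complex.mul_re, (hdiag i).2]
  have hsum1 : ∑ i, (τ i i).re = 1 := by
    have := congrArg Complex.re hτtr
    rw [Matrix.trace] at this
    simpa [Complex.re_sum, Matrix.diag] using this
  rw [hre]
  calc (⨅ i, hH.eigenvalues i) = ∑ i, (⨅ j, hH.eigenvalues j) * (τ i i).re := by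
        rw [← Finset.mul_sum, hsum1, mul_one]
    _ ≤ ∑ i, hH.eigenvalues i * (τ i i).re := by
        refine Finset.sum_le_sum fun i _ => ?_
        exact mul_le_mul_of_nonneg_right (ciInf_le (Finite.bddBelow_range _) i) (hdiag i).1

lemma aux_dot_sum_smul {X : Type*} [Fintype X] (w : n → ℂ) (φ : X → n → ℂ) (g : X → ℂ) :
    w ⬝ᵥ (∑ x, g x • φ x) = ∑ x, g x * (w ⬝ᵥ φ x) := by
  simp only [dotProduct, Finset.sum_apply, Pi.smul_apply, smul_eq_mul, Finset.mul_sum]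
  rw [Finset.sum_comm]
  exact Finset.sum_congr rfl fun x _ => Finset.sum_congr rfl fun i _ => by ring

end AuxLemmas

/-- Impossibility theorem, part 3: invariant weight entropy (Feature 2) plus
strictly positive work extraction for all outcomes (Feature 3) force every
post-measurement state to have energy strictly above the ground state; in
particular the post-measurement states cannot form an orthonormal eigenbasis of
the system Hamiltonian (negating Feature 1). -/
theorem features_two_three_exclude_one
    {dW dS : ℕ} {X : Type*} [Fintype X] [DecidableEq X]
    (hdS : 0 < dS)
    (HW : Matrix (Fin dW) (Fin dW) ℂ) (HS : Matrix (Fin dS) (Fin dS) ℂ)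
    (hHW : HW.IsHermitian) (hHS : HS.IsHermitian)
    (kT : ℝ) (hkT : 0 < kT)
    (φt : X → (Fin dS → ℂ))
    (hcard : Fintype.card X = dS)
    (hφt : ∀ x, star (φt x) ⬝ᵥ φt x = 1)
    (U : X → Matrix (Fin dW × Fin dS) (Fin dW × Fin dS) ℂ)
    (hU : ∀ x, U x ∈ Matrix.unitaryGroup (Fin dW × Fin dS) ℂ)
    (hUcomm : ∀ x, U x * (HW ⊗ₖ (1 : Matrix (Fin dS) (Fin dS) ℂ)
        + (1 : Matrix (Fin dW) (Fin dW) ℂ) ⊗ₖ HS)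
      = (HW ⊗ₖ (1 : Matrix (Fin dS) (Fin dS) ℂ)
        + (1 : Matrix (Fin dW) (Fin dW) ℂ) ⊗ₖ HS) * U x)
    (ρW : Matrix (Fin dW) (Fin dW) ℂ) (hρW : IsDensityMatrix ρW)
    (hS : ∀ x, vnEntropy (ptrace2 (U x * (ρW ⊗ₖ outer (φt x)) * (U x)ᴴ))
        = vnEntropy ρW)
    (hW : ∀ x, 0 < freeEnergy kT HW (ptrace2 (U x * (ρW ⊗ₖ outer (φt x)) * (U x)ᴴ))
        - freeEnergy kT HW ρW) :
    (∀ x, lambdaMin HS < (star (φt x) ⬝ᵥ HS.mulVec (φt x)).re) ∧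
    ¬ ((∀ x y, star (φt x) ⬝ᵥ φt y = if x = y then 1 else 0) ∧
        (∀ x, ∃ μ : ℝ, HS.mulVec (φt x) = (μ : ℂ) • φt x)) := by
  haveI : Nonempty (Fin dS) := Fin.pos_iff_nonempty.mp hdS
  have hlam : lambdaMin HS = ⨅ i, hHS.eigenvalues i := by
    simp only [lambdaMin]; exact dif_pos hHS
  -- Part A
  have partA : ∀ x, lambdaMin HS < (star (φt x) ⬝ᵥ HS.mulVec (φt x)).re := by
    intro x
    set σ : Matrix (Fin dW × Fin dS) (Fin dW × Fin dS) ℂ := ρW ⊗ₖ outer (φt x) with hσdef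
    set σ' : Matrix (Fin dW × Fin dS) (Fin dW × Fin dS) ℂ := U x * σ * (U x)ᴴ with hσ'def
    set Ht : Matrix (Fin dW × Fin dS) (Fin dW × Fin dS) ℂ :=
      HW ⊗ₖ (1 : Matrix (Fin dS) (Fin dS) ℂ)
        + (1 : Matrix (Fin dW) (Fin dW) ℂ) ⊗ₖ HS with hHtdef
    have hUU : (U x)ᴴ * U x = 1 := by
      simpa [Matrix.star_eq_conjTranspose] using (Matrix.mem_unitaryGroup_iff').mp (hU x)
    have hσPSD : σ.PosSemidef := aux_kron_posSemidef hρW.1 (aux_outer_posSemidef _)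
    have hσ'PSD : σ'.PosSemidef := hσPSD.mul_mul_conjTranspose_same (U x)
    have hσtr : σ.trace = 1 := by
      rw [hσdef, Matrix.trace_kronecker, hρW.2, aux_outer_trace (hφt x), mul_one]
    have hσ'tr : σ'.trace = 1 := by
      rw [hσ'def, Matrix.trace_mul_cycle, hUU, Matrix.one_mul, hσtr]
    -- energy conservation
    have hcons : Matrix.trace (Ht * σ') = Matrix.trace (Ht * σ) := by
      have h1 : Ht * σ' = (Ht * U x) * (σ * (U x)ᴴ) := by
        rw [hσ'def]; simp only [Matrix.mul_assoc]
      rw [h1, ← hUcomm x, Matrix.mul_assoc, Matrix.trace_mul_comm,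
        Matrix.mul_assoc Ht, Matrix.mul_assoc σ, hUU, Matrix.mul_one]
    have hsplit : ∀ τ : Matrix (Fin dW × Fin dS) (Fin dW × Fin dS) ℂ,
        Matrix.trace (Ht * τ)
          = Matrix.trace ((HW ⊗ₖ (1 : Matrix (Fin dS) (Fin dS) ℂ)) * τ)
            + Matrix.trace (((1 : Matrix (Fin dW) (Fin dW) ℂ) ⊗ₖ HS) * τ) := by
      intro τ
      rw [hHtdef, Matrix.add_mul, Matrix.trace_add]
    have h5 : Matrix.trace ((HW ⊗ₖ (1 : Matrix (Fin dS) (Fin dS) ℂ)) * σ)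
        = Matrix.trace (HW * ρW) := by
      rw [hσdef, ← Matrix.mul_kronecker_mul, Matrix.one_mul, Matrix.trace_kronecker,
        aux_outer_trace (hφt x), mul_one]
    have h6 : Matrix.trace (((1 : Matrix (Fin dW) (Fin dW) ℂ) ⊗ₖ HS) * σ)
        = star (φt x) ⬝ᵥ HS.mulVec (φt x) := by
      rw [hσdef, ← Matrix.mul_kronecker_mul, Matrix.one_mul, Matrix.trace_kronecker,
        hρW.2, one_mul, aux_trace_mul_outer]
    -- the key balance equation
    have hbal : Matrix.trace (HW * ptrace2 σ') + Matrix.trace (HS * ptrace1 σ')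
        = Matrix.trace (HW * ρW) + star (φt x) ⬝ᵥ HS.mulVec (φt x) := by
      rw [← aux_trace_kron_one, ← aux_trace_one_kron, ← hsplit, hcons, hsplit, h5, h6]
    -- positivity of extracted work
    have h1 : 0 < (Matrix.trace (HW * ptrace2 σ')).re - (Matrix.trace (HW * ρW)).re := by
      have := hW x
      rw [freeEnergy, freeEnergy, hS x] at this
      rw [hσ'def, hσdef] at *
      linarith
    -- lower bound on system energy
    have h2 : lambdaMin HS ≤ (Matrix.trace (HS * ptrace1 σ')).re := by
      rw [hlam]
      exact aux_lambdaMin_le_trace_re hHS (aux_ptrace1_posSemidef hσ'PSD)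
        (by rw [aux_trace_ptrace1, hσ'tr])
    have hre := congrArg Complex.re hbal
    simp only [Complex.add_re] at hre
    linarith
  refine ⟨partA, ?_⟩
  rintro ⟨horth, heig⟩
  -- eigenvalues of the φt
  choose μ hμ using heig
  have hμval : ∀ x, star (φt x) ⬝ᵥ HS.mulVec (φt x) = (μ x : ℂ) := by
    intro x
    rw [hμ x, dotProduct_smul, hφt x, smul_eq_mul, mul_one]
  have hgt : ∀ x, lambdaMin HS < μ x := by
    intro x
    have := partA x
    rwa [hμval x, Complex.ofReal_re] at this
  -- linear independence of the φt
  have hli : LinearIndependent ℂ φt := by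
    rw [Fintype.linearIndependent_iff]
    intro g hg y
    have := congrArg (fun u => star (φt y) ⬝ᵥ u) hg
    simp only [aux_dot_sum_smul, dotProduct_zero] at this
    simp only [horth] at this
    simpa [Finset.sum_ite_eq', eq_comm] using this
  haveI : Nonempty X := by
    rw [← Fintype.card_pos_iff, hcard]; exact hdS
  have hrank : Fintype.card X = Module.finrank ℂ (Fin dS → ℂ) := by
    rw [hcard, Module.finrank_fin_fun]
  let B := basisOfLinearIndependentOfCardEqFinrank hli hrank
  have hB : ⇑B = φt := coe_basisOfLinearIndependentOfCardEqFinrank hli hrank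
  -- minimal eigenvalue and its eigenvector
  obtain ⟨i₀, hi₀⟩ := Finite.exists_min hHS.eigenvalues
  have hlamin : lambdaMin HS = hHS.eigenvalues i₀ := by
    rw [hlam]
    exact le_antisymm (ciInf_le (Finite.bddBelow_range _) i₀) (le_ciInf hi₀)
  obtain ⟨v, hvne, hvv⟩ : ∃ v : Fin dS → ℂ, v ≠ 0 ∧ HS *ᵥ v = hHS.eigenvalues i₀ • v :=
    ⟨_, by simpa using hHS.eigenvectorBasis.orthonormal.ne_zero i₀, hHS.mulVec_eigenvectorBasis i₀⟩
  -- expand v in the basis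
  have hrepr : ∑ x, B.repr v x • φt x = v := by
    conv_rhs => rw [← B.sum_repr v]
    simp [hB]
  set c : X → ℂ := fun x => B.repr v x with hc
  -- apply HS to the expansion
  have hexp1 : HS *ᵥ v = ∑ x, (c x * μ x) • φt x := by
    rw [← hrepr, ← Matrix.mulVecLin_apply, map_sum]
    refine Finset.sum_congr rfl fun x _ => ?_
    rw [LinearMap.map_smul, Matrix.mulVecLin_apply, hμ x, smul_smul]
  have hexp2 : HS *ᵥ v = ∑ x, ((hHS.eigenvalues i₀ : ℂ) * c x) • φt x := by
    rw [hvv, ← hrepr, Finset.smul_sum]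
    refine Finset.sum_congr rfl fun x _ => ?_
    ext i
    simp only [Pi.smul_apply, smul_eq_mul, Complex.real_smul]
    ring
  -- coefficients must vanish
  have hzero : ∀ y, c y = 0 := by
    intro y
    have hdiff : ∑ x, ((c x * μ x) - ((hHS.eigenvalues i₀ : ℂ) * c x)) • φt x = 0 := by
      simp only [sub_smul, Finset.sum_sub_distrib]
      rw [← hexp1, ← hexp2, sub_self]
    have := Fintype.linearIndependent_iff.mp hli _ hdiff y
    have hne : (μ y : ℂ) ≠ (hHS.eigenvalues i₀ : ℂ) := by
      have := hgt y
      rw [hlamin] at this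
      exact_mod_cast ne_of_gt this
    have : c y * ((μ y : ℂ) - (hHS.eigenvalues i₀ : ℂ)) = 0 := by ring_nf; ring_nf at this; linear_combination this
    rcases mul_eq_zero.mp this with h | h
    · exact h
    · exact absurd (sub_eq_zero.mp h) hne
  -- hence v = 0, contradiction
  apply hvne
  rw [← hrepr]
  simp only [← hc, hzero, zero_smul, Finset.sum_const_zero]
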